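/- Completion-of-squares identity for the infinite-horizon LQ game cost: let A, B, B_w, Q, R, γ be as in the game Riccati setup with R positive definite, γ > 0, and let P* be a symmetric n×n matrix with 𝓡(P*) = 0. Let x : [0,∞) → ℝⁿ be differentiable with x'(t) = A x(t) + B u(t) + B_w w(t) for all t ≥ 0, x(0) = x_0, and x(t) → 0 as t → ∞, where u : [0,∞) → ℝ^m and w : [0,∞) → ℝ^p are measurable with t ↦ ‖x(t)‖², t ↦ ‖u(t)‖², t ↦ ‖w(t)‖² integrable on (0,∞). Then ∫₀^∞ ( x(t)ᵀQx(t) + u(t)ᵀRu(t) − γ²‖w(t)‖² ) dt = x_0ᵀP*x_0 + ∫₀^∞ (u(t) + R⁻¹BᵀP*x(t))ᵀ R (u(t) + R⁻¹BᵀP*x(t)) dt − γ² ∫₀^∞ ‖w(t) − γ⁻²B_wᵀP*x(t)‖² dt, and all three integrals are finite. -/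

import Mathlib

open Matrix MeasureTheory Filter

section Aux

lemma dot_mulVec_left' {k l : ℕ} (M : Matrix (Fin k) (Fin l) ℝ) (y : Fin l → ℝ) (z : Fin k → ℝ) :
    (M *ᵥ y) ⬝ᵥ z = y ⬝ᵥ (Mᵀ *ᵥ z) := by
  rw [dotProduct_comm, dotProduct_mulVec, ← mulVec_transpose, dotProduct_comm]

lemma key_alg' {n m p : ℕ} (A : Matrix (Fin n) (Fin n) ℝ) (B : Matrix (Fin n) (Fin m) ℝ)
    (Bw : Matrix (Fin n) (Fin p) ℝ) (Q : Matrix (Fin n) (Fin n) ℝ)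
    (R : Matrix (Fin m) (Fin m) ℝ) (hR : IsUnit R.det) (hRsymm : R.IsSymm)
    (γ : ℝ) (hγ : γ ≠ 0) (Ps : Matrix (Fin n) (Fin n) ℝ) (hPs : Ps.IsSymm)
    (hARE : Aᵀ * Ps + Ps * A + Q - Ps * B * R⁻¹ * Bᵀ * Ps + (γ ^ 2)⁻¹ • (Ps * Bw * Bwᵀ * Ps) = 0)
    (a : Fin n → ℝ) (b : Fin m → ℝ) (c : Fin p → ℝ) :
    a ⬝ᵥ Q *ᵥ a + b ⬝ᵥ R *ᵥ b - γ^2 * (c ⬝ᵥ c)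
      = -((A *ᵥ a + B *ᵥ b + Bw *ᵥ c) ⬝ᵥ Ps *ᵥ a + a ⬝ᵥ Ps *ᵥ (A *ᵥ a + B *ᵥ b + Bw *ᵥ c))
        + (b + (R⁻¹ * Bᵀ * Ps) *ᵥ a) ⬝ᵥ R *ᵥ (b + (R⁻¹ * Bᵀ * Ps) *ᵥ a)
        - γ^2 * ((c - (γ^2)⁻¹ • ((Bwᵀ * Ps) *ᵥ a)) ⬝ᵥ (c - (γ^2)⁻¹ • ((Bwᵀ * Ps) *ᵥ a))) := by
  have hγ2 : (γ:ℝ)^2 ≠ 0 := pow_ne_zero _ hγ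
  have h0 : a ⬝ᵥ ((Aᵀ * Ps + Ps * A + Q - Ps * B * R⁻¹ * Bᵀ * Ps
      + (γ ^ 2)⁻¹ • (Ps * Bw * Bwᵀ * Ps)) *ᵥ a) = 0 := by
    rw [hARE]; simp
  have hRinv : R⁻¹ * R = 1 := nonsing_inv_mul R hR
  have hRinvT : (R⁻¹)ᵀ = R⁻¹ := by rw [transpose_nonsing_inv, hRsymm.eq]
  have hc1 : R * (R⁻¹ * (Bᵀ * Ps)) = Bᵀ * Ps := by
    rw [← Matrix.mul_assoc, mul_nonsing_inv R hR, Matrix.one_mul]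
  have hc2 : R⁻¹ * (R * (R⁻¹ * (Bᵀ * Ps))) = R⁻¹ * (Bᵀ * Ps) := by rw [hc1]
  have hδ : γ^2 * (γ^2)⁻¹ = 1 := mul_inv_cancel₀ hγ2
  simp only [Matrix.add_mulVec, Matrix.sub_mulVec, Matrix.mulVec_add, Matrix.mulVec_sub,
    Matrix.smul_mulVec, Matrix.mulVec_smul,
    dotProduct_add, add_dotProduct, dotProduct_sub, sub_dotProduct,
    dotProduct_smul, smul_dotProduct, mulVec_mulVec,
    dot_mulVec_left', transpose_mul, transpose_transpose, hPs.eq, hRsymm.eq, hRinvT,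
    smul_eq_mul, Matrix.mul_assoc, hc1, hc2, hRinv, Matrix.mul_one, Matrix.one_mul] at h0 ⊢
  linear_combination h0 - (a ⬝ᵥ (Ps * Bw) *ᵥ c + c ⬝ᵥ (Bwᵀ * Ps) *ᵥ a
    - (γ^2)⁻¹ * (a ⬝ᵥ (Ps * (Bw * (Bwᵀ * Ps))) *ᵥ a)) * hδ

lemma hasDerivAt_dotMul' {k l : ℕ} (M : Matrix (Fin k) (Fin l) ℝ)
    {f : ℝ → Fin k → ℝ} {g : ℝ → Fin l → ℝ} {f' : Fin k → ℝ} {g' : Fin l → ℝ} {t : ℝ}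
    (hf : HasDerivAt f f' t) (hg : HasDerivAt g g' t) :
    HasDerivAt (fun s => f s ⬝ᵥ M *ᵥ g s) (f' ⬝ᵥ M *ᵥ g t + f t ⬝ᵥ M *ᵥ g') t := by
  have hf' := hasDerivAt_pi.1 hf
  have hg' := hasDerivAt_pi.1 hg
  have h : ∀ i : Fin k, HasDerivAt (fun s => f s i * ∑ j, M i j * g s j)
      (f' i * ∑ j, M i j * g t j + f t i * ∑ j, M i j * g' j) t := fun i =>
    (hf' i).mul (HasDerivAt.fun_sum fun j _ => (hg' j).const_mul (M i j))
  have hsum := HasDerivAt.fun_sum (fun i (_ : i ∈ Finset.univ) => h i)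
  simpa [dotProduct, Matrix.mulVec, Finset.sum_add_distrib] using hsum

lemma dot_self_nonneg' {k : ℕ} (v : Fin k → ℝ) : 0 ≤ v ⬝ᵥ v :=
  Finset.sum_nonneg fun _ _ => mul_self_nonneg _

lemma continuous_dot' {k : ℕ} :
    Continuous (fun vw : (Fin k → ℝ) × (Fin k → ℝ) => vw.1 ⬝ᵥ vw.2) := by
  unfold dotProduct
  exact continuous_finset_sum _ fun i _ =>
    ((continuous_apply i).comp continuous_fst).mul ((continuous_apply i).comp continuous_snd)

lemma continuous_mulVec' {k l : ℕ} (M : Matrix (Fin k) (Fin l) ℝ) :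
    Continuous (fun v : Fin l → ℝ => M *ᵥ v) := by
  unfold Matrix.mulVec dotProduct
  exact continuous_pi fun i => continuous_finset_sum _ fun j _ =>
    continuous_const.mul (continuous_apply j)

lemma mulVec_dot_le' {k l : ℕ} (M : Matrix (Fin k) (Fin l) ℝ) (v : Fin l → ℝ) :
    (M *ᵥ v) ⬝ᵥ (M *ᵥ v) ≤ (∑ i, ∑ j, (M i j)^2) * (v ⬝ᵥ v) := by
  have h : ∀ i : Fin k, (M *ᵥ v) i * (M *ᵥ v) i ≤ (∑ j, (M i j)^2) * (v ⬝ᵥ v) := by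
    intro i
    have := Finset.sum_mul_sq_le_sq_mul_sq Finset.univ (fun j => M i j) v
    simpa [Matrix.mulVec, dotProduct, sq] using this
  calc (M *ᵥ v) ⬝ᵥ (M *ᵥ v) = ∑ i, (M *ᵥ v) i * (M *ᵥ v) i := rfl
    _ ≤ ∑ i, (∑ j, (M i j)^2) * (v ⬝ᵥ v) := Finset.sum_le_sum fun i _ => h i
    _ = (∑ i, ∑ j, (M i j)^2) * (v ⬝ᵥ v) := by rw [Finset.sum_mul]

/-- square-integrability on (0,∞) -/
def SqI {k : ℕ} (f : ℝ → Fin k → ℝ) : Prop :=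
  AEStronglyMeasurable f (volume.restrict (Set.Ioi (0:ℝ))) ∧
  IntegrableOn (fun t => f t ⬝ᵥ f t) (Set.Ioi (0:ℝ))

lemma SqI.dot {k : ℕ} {f g : ℝ → Fin k → ℝ} (hf : SqI f) (hg : SqI g) :
    IntegrableOn (fun t => f t ⬝ᵥ g t) (Set.Ioi (0:ℝ)) := by
  have hmeas : AEStronglyMeasurable (fun t => f t ⬝ᵥ g t)
      (volume.restrict (Set.Ioi (0:ℝ))) :=
    continuous_dot'.comp_aestronglyMeasurable (hf.1.prodMk hg.1)
  refine Integrable.mono' ((hf.2.add hg.2).const_mul (1/2)) hmeas ?_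
  refine Filter.Eventually.of_forall fun t => ?_
  have h1 : 0 ≤ (f t - g t) ⬝ᵥ (f t - g t) := dot_self_nonneg' _
  have h2 : 0 ≤ (f t + g t) ⬝ᵥ (f t + g t) := dot_self_nonneg' _
  have hc : g t ⬝ᵥ f t = f t ⬝ᵥ g t := dotProduct_comm _ _
  simp only [sub_dotProduct, dotProduct_sub, add_dotProduct, dotProduct_add, hc] at h1 h2
  simp only [Pi.add_apply]
  rw [Real.norm_eq_abs, abs_le]
  constructor <;> linarith

lemma SqI.mulVec {k l : ℕ} (M : Matrix (Fin k) (Fin l) ℝ) {f : ℝ → Fin l → ℝ}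
    (hf : SqI f) : SqI (fun t => M *ᵥ f t) := by
  have hm : AEStronglyMeasurable (fun t => M *ᵥ f t) (volume.restrict (Set.Ioi (0:ℝ))) :=
    (continuous_mulVec' M).comp_aestronglyMeasurable hf.1
  refine ⟨hm, ?_⟩
  have hbd : Integrable (fun t => (∑ i, ∑ j, (M i j)^2) * (f t ⬝ᵥ f t))
      (volume.restrict (Set.Ioi (0:ℝ))) := hf.2.const_mul _
  have hcont : Continuous (fun v : Fin l → ℝ => (M *ᵥ v) ⬝ᵥ (M *ᵥ v)) :=
    continuous_dot'.comp ((continuous_mulVec' M).prodMk (continuous_mulVec' M))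
  refine Integrable.mono' hbd (hcont.comp_aestronglyMeasurable hf.1) ?_
  refine Filter.Eventually.of_forall fun t => ?_
  rw [Real.norm_eq_abs, abs_of_nonneg (dot_self_nonneg' _)]
  exact mulVec_dot_le' M (f t)

lemma SqI.add {k : ℕ} {f g : ℝ → Fin k → ℝ} (hf : SqI f) (hg : SqI g) :
    SqI (fun t => f t + g t) := by
  refine ⟨hf.1.add hg.1, ?_⟩
  have : (fun t => (f t + g t) ⬝ᵥ (f t + g t))
      = fun t => f t ⬝ᵥ f t + (f t ⬝ᵥ g t + (g t ⬝ᵥ f t + g t ⬝ᵥ g t)) := by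
    funext t; simp [add_dotProduct, dotProduct_add]; ring
  rw [this]
  exact hf.2.add ((hf.dot hg).add ((hg.dot hf).add hg.2))

lemma SqI.smul {k : ℕ} (c : ℝ) {f : ℝ → Fin k → ℝ} (hf : SqI f) :
    SqI (fun t => c • f t) := by
  refine ⟨hf.1.const_smul c, ?_⟩
  have : (fun t => (c • f t) ⬝ᵥ (c • f t)) = fun t => (c*c) * (f t ⬝ᵥ f t) := by
    funext t; simp [smul_dotProduct, dotProduct_smul]; ring
  rw [this]
  exact hf.2.const_mul _

lemma SqI.sub {k : ℕ} {f g : ℝ → Fin k → ℝ} (hf : SqI f) (hg : SqI g) :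
    SqI (fun t => f t - g t) := by
  have := hf.add (hg.smul (-1))
  simpa [sub_eq_add_neg] using this

end Aux

/-- Completion-of-squares identity for the infinite-horizon LQ game cost. -/
theorem lq_game_completion_of_squares {n m p : ℕ}
    (A : Matrix (Fin n) (Fin n) ℝ) (B : Matrix (Fin n) (Fin m) ℝ)
    (Bw : Matrix (Fin n) (Fin p) ℝ)
    (Q : Matrix (Fin n) (Fin n) ℝ) (hQ : Q.IsSymm)
    (R : Matrix (Fin m) (Fin m) ℝ) (hR : R.PosDef) (hRsymm : R.IsSymm)
    (γ : ℝ) (hγ : 0 < γ)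
    (Ps : Matrix (Fin n) (Fin n) ℝ) (hPs : Ps.IsSymm)
    (hARE : Aᵀ * Ps + Ps * A + Q - Ps * B * R⁻¹ * Bᵀ * Ps
      + (γ ^ 2)⁻¹ • (Ps * Bw * Bwᵀ * Ps) = 0)
    (x0 : Fin n → ℝ)
    (x : ℝ → Fin n → ℝ) (u : ℝ → Fin m → ℝ) (w : ℝ → Fin p → ℝ)
    (hu : Measurable u) (hw : Measurable w)
    (hderiv : ∀ t : ℝ, 0 ≤ t →
      HasDerivAt x (A *ᵥ x t + B *ᵥ u t + Bw *ᵥ w t) t)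
    (hx0 : x 0 = x0)
    (hlim : Tendsto x atTop (nhds 0))
    (hint_x : IntegrableOn (fun t => x t ⬝ᵥ x t) (Set.Ioi (0 : ℝ)))
    (hint_u : IntegrableOn (fun t => u t ⬝ᵥ u t) (Set.Ioi (0 : ℝ)))
    (hint_w : IntegrableOn (fun t => w t ⬝ᵥ w t) (Set.Ioi (0 : ℝ))) :
    (let uh : ℝ → Fin m → ℝ := fun t => u t + (R⁻¹ * Bᵀ * Ps) *ᵥ x t
     let wh : ℝ → Fin p → ℝ := fun t => w t - (γ ^ 2)⁻¹ • ((Bwᵀ * Ps) *ᵥ x t)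
     IntegrableOn
       (fun t => x t ⬝ᵥ Q *ᵥ x t + u t ⬝ᵥ R *ᵥ u t - γ ^ 2 * (w t ⬝ᵥ w t))
       (Set.Ioi (0 : ℝ)) ∧
     IntegrableOn (fun t => uh t ⬝ᵥ R *ᵥ uh t) (Set.Ioi (0 : ℝ)) ∧
     IntegrableOn (fun t => wh t ⬝ᵥ wh t) (Set.Ioi (0 : ℝ)) ∧
     (∫ t in Set.Ioi (0 : ℝ),
        (x t ⬝ᵥ Q *ᵥ x t + u t ⬝ᵥ R *ᵥ u t - γ ^ 2 * (w t ⬝ᵥ w t)))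
       = x0 ⬝ᵥ Ps *ᵥ x0
         + (∫ t in Set.Ioi (0 : ℝ), uh t ⬝ᵥ R *ᵥ uh t)
         - γ ^ 2 * ∫ t in Set.Ioi (0 : ℝ), wh t ⬝ᵥ wh t) := by
  intro uh wh
  have hγ0 : γ ≠ 0 := ne_of_gt hγ
  have hRu : IsUnit R.det := (hR.det_pos).ne'.isUnit
  -- measurability / square integrability
  have hxcont : ∀ t : ℝ, 0 ≤ t → ContinuousAt x t := fun t ht => (hderiv t ht).continuousAt
  have hxm : AEStronglyMeasurable x (volume.restrict (Set.Ioi (0:ℝ))) := by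
    have : ContinuousOn x (Set.Ioi (0:ℝ)) :=
      fun t ht => (hxcont t (le_of_lt ht)).continuousWithinAt
    exact this.aestronglyMeasurable measurableSet_Ioi
  have Sx : SqI x := ⟨hxm, hint_x⟩
  have Su : SqI u := ⟨hu.aestronglyMeasurable.restrict, hint_u⟩
  have Sw : SqI w := ⟨hw.aestronglyMeasurable.restrict, hint_w⟩
  have Suh : SqI uh := Su.add (Sx.mulVec (R⁻¹ * Bᵀ * Ps))
  have Swh : SqI wh := Sw.sub (SqI.smul ((γ^2)⁻¹) (Sx.mulVec (Bwᵀ * Ps)))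
  have Sd : SqI (fun t => A *ᵥ x t + B *ᵥ u t + Bw *ᵥ w t) :=
    ((Sx.mulVec A).add (Su.mulVec B)).add (Sw.mulVec Bw)
  -- the three integrabilities
  have I1 : IntegrableOn
      (fun t => x t ⬝ᵥ Q *ᵥ x t + u t ⬝ᵥ R *ᵥ u t - γ ^ 2 * (w t ⬝ᵥ w t))
      (Set.Ioi (0 : ℝ)) :=
    ((Sx.dot (Sx.mulVec Q)).add (Su.dot (Su.mulVec R))).sub (hint_w.const_mul _)
  have I2 : IntegrableOn (fun t => uh t ⬝ᵥ R *ᵥ uh t) (Set.Ioi (0 : ℝ)) :=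
    Suh.dot (Suh.mulVec R)
  have I3 : IntegrableOn (fun t => wh t ⬝ᵥ wh t) (Set.Ioi (0 : ℝ)) := Swh.dot Swh
  -- derivative of the storage function
  set V : ℝ → ℝ := fun t => x t ⬝ᵥ Ps *ᵥ x t with hV
  set φ : ℝ → ℝ := fun t => (A *ᵥ x t + B *ᵥ u t + Bw *ᵥ w t) ⬝ᵥ Ps *ᵥ x t
      + x t ⬝ᵥ Ps *ᵥ (A *ᵥ x t + B *ᵥ u t + Bw *ᵥ w t) with hφ
  have hVd : ∀ t : ℝ, 0 ≤ t → HasDerivAt V (φ t) t := fun t ht =>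
    hasDerivAt_dotMul' Ps (hderiv t ht) (hderiv t ht)
  have hφint : IntegrableOn φ (Set.Ioi (0:ℝ)) :=
    (Sd.dot (Sx.mulVec Ps)).add (Sx.dot (Sd.mulVec Ps))
  have hVlim : Tendsto V atTop (nhds 0) := by
    have hc : Continuous (fun v : Fin n → ℝ => v ⬝ᵥ Ps *ᵥ v) :=
      continuous_dot'.comp (continuous_id.prodMk (continuous_mulVec' Ps))
    have := (hc.tendsto 0).comp hlim
    simp at this; exact this
  have hInt : ∫ t in Set.Ioi (0:ℝ), φ t = 0 - V 0 :=
    integral_Ioi_of_hasDerivAt_of_tendsto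
      ((hVd 0 le_rfl).continuousAt.continuousWithinAt)
      (fun t ht => hVd t (le_of_lt (Set.mem_Ioi.1 ht))) hφint hVlim
  have hV0 : V 0 = x0 ⬝ᵥ Ps *ᵥ x0 := by rw [hV]; simp [hx0]
  -- pointwise identity
  have hpt : ∀ t : ℝ,
      x t ⬝ᵥ Q *ᵥ x t + u t ⬝ᵥ R *ᵥ u t - γ ^ 2 * (w t ⬝ᵥ w t)
        = -φ t + uh t ⬝ᵥ R *ᵥ uh t - γ ^ 2 * (wh t ⬝ᵥ wh t) := by
    intro t
    have := key_alg' A B Bw Q R hRu hRsymm γ hγ0 Ps hPs hARE (x t) (u t) (w t)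
    simp only [hφ, uh, wh]
    linarith [this]
  refine ⟨I1, I2, I3, ?_⟩
  calc (∫ t in Set.Ioi (0 : ℝ),
        (x t ⬝ᵥ Q *ᵥ x t + u t ⬝ᵥ R *ᵥ u t - γ ^ 2 * (w t ⬝ᵥ w t)))
      = ∫ t in Set.Ioi (0 : ℝ), (-φ t + uh t ⬝ᵥ R *ᵥ uh t - γ ^ 2 * (wh t ⬝ᵥ wh t)) := by
        exact integral_congr_ae (Filter.Eventually.of_forall fun t => hpt t)
    _ = (∫ t in Set.Ioi (0 : ℝ), (-φ t + uh t ⬝ᵥ R *ᵥ uh t))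
        - ∫ t in Set.Ioi (0 : ℝ), γ ^ 2 * (wh t ⬝ᵥ wh t) :=
        integral_sub (hφint.neg.add I2) (I3.const_mul _)
    _ = (∫ t in Set.Ioi (0 : ℝ), -φ t) + (∫ t in Set.Ioi (0 : ℝ), uh t ⬝ᵥ R *ᵥ uh t)
        - γ ^ 2 * ∫ t in Set.Ioi (0 : ℝ), wh t ⬝ᵥ wh t := by
        have hφneg : IntegrableOn (fun t => -φ t) (Set.Ioi (0:ℝ)) := hφint.neg
        rw [integral_add hφneg I2, MeasureTheory.integral_const_mul]
    _ = x0 ⬝ᵥ Ps *ᵥ x0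
        + (∫ t in Set.Ioi (0 : ℝ), uh t ⬝ᵥ R *ᵥ uh t)
        - γ ^ 2 * ∫ t in Set.Ioi (0 : ℝ), wh t ⬝ᵥ wh t := by
        rw [integral_neg, hInt, hV0]; ring
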